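/- Let f and g be holomorphic germs at 0 with f(0) = g(0) = 0, f'(0) = g'(0) = 1, written f(z) = z + α z^{p+1} + O(z^{p+2}) and g(z) = z + β z^{p+1} + O(z^{p+2}) with α ≠ 0 and β/α = m/n a rational number (in lowest terms, n > 0). Then either g^n = f^m as germs, or the germ h := g^n ∘ f^{-m} has the form h(z) = z + β' z^{q'+1} + O(z^{q'+2}) with β' ≠ 0 and q' > p. -/

import Mathlib

open Filter Topology Asymptotics

/-- Iterate of a germ with integer exponent: nonnegative powers iterate `f`,
negative powers iterate the inverse `finv`. -/
noncomputable def iterZ (f finv : ℂ → ℂ) (k : ℤ) : ℂ → ℂ :=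
  if 0 ≤ k then f^[k.toNat] else finv^[(-k).toNat]

private lemma lin_bigO {ψ : ℂ → ℂ} (hA : AnalyticAt ℂ ψ 0) (h0 : ψ 0 = 0) :
    ψ =O[𝓝 0] fun z => z := by
  simpa [h0] using hA.differentiableAt.isBigO_sub

private lemma pow_bigO_pow {i j : ℕ} (h : j ≤ i) :
    (fun z : ℂ => z ^ i) =O[𝓝 0] fun z => z ^ j := by
  have h1 : (fun z : ℂ => z ^ (i - j)) =O[𝓝 0] (fun _ => (1 : ℂ)) :=
    ((continuous_pow (i - j)).tendsto 0).isBigO_one ℂ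
  have h2 := (isBigO_refl (fun z : ℂ => z ^ j) (𝓝 0)).mul h1
  exact h2.congr (fun z => by rw [← pow_add, Nat.add_sub_cancel' h]) (fun z => mul_one _)

private lemma sub_id_bigO {ψ : ℂ → ℂ} {b : ℂ} {p : ℕ}
    (h : (fun z => ψ z - z - b * z ^ (p + 1)) =O[𝓝 0] fun z => z ^ (p + 2)) :
    (fun z => ψ z - z) =O[𝓝 0] fun z => z ^ (p + 1) := by
  have h1 := (h.trans (pow_bigO_pow (by omega))).add
    ((isBigO_refl (fun z : ℂ => z ^ (p + 1)) (𝓝 0)).const_mul_left b)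
  exact h1.congr_left fun z => by ring

private lemma pow_diff_bigO {ψ : ℂ → ℂ} {p : ℕ} (hp : 1 ≤ p)
    (hlin : ψ =O[𝓝 0] fun z => z)
    (hsub : (fun z => ψ z - z) =O[𝓝 0] fun z => z ^ (p + 1)) :
    (fun z => ψ z ^ (p + 1) - z ^ (p + 1)) =O[𝓝 0] fun z => z ^ (p + 2) := by
  have hsum : (fun z => ∑ i ∈ Finset.range (p + 1), ψ z ^ i * z ^ (p - i))
      =O[𝓝 0] fun z : ℂ => z ^ p := by
    refine IsBigO.fun_sum fun i hi => ?_
    have hi' : i ≤ p := Nat.lt_succ_iff.mp (Finset.mem_range.mp hi)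
    have h := (hlin.pow i).mul (isBigO_refl (fun z : ℂ => z ^ (p - i)) (𝓝 0))
    exact h.congr_right fun z => by rw [← pow_add, Nat.add_sub_cancel' hi']
  have hmul := hsum.mul hsub
  have heq : ∀ z : ℂ, (∑ i ∈ Finset.range (p + 1), ψ z ^ i * z ^ (p - i)) * (ψ z - z)
      = ψ z ^ (p + 1) - z ^ (p + 1) := fun z => by
    have := geom_sum₂_mul (ψ z) z (p + 1)
    simpa using this
  have h2 : (fun z => ψ z ^ (p + 1) - z ^ (p + 1)) =O[𝓝 0] fun z : ℂ => z ^ p * z ^ (p + 1) :=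
    hmul.congr_left heq
  refine h2.trans ?_
  exact (pow_bigO_pow (show p + 2 ≤ p + (p + 1) by omega)).congr_left
    fun z => (pow_add z p (p + 1))

private lemma exp_comp {φ ψ : ℂ → ℂ} {a b : ℂ} {p : ℕ} (hp : 1 ≤ p)
    (hφexp : (fun z => φ z - z - a * z ^ (p + 1)) =O[𝓝 0] fun z => z ^ (p + 2))
    (hψA : AnalyticAt ℂ ψ 0) (hψ0 : ψ 0 = 0)
    (hψexp : (fun z => ψ z - z - b * z ^ (p + 1)) =O[𝓝 0] fun z => z ^ (p + 2)) :
    (fun z => φ (ψ z) - z - (a + b) * z ^ (p + 1)) =O[𝓝 0] fun z => z ^ (p + 2) := by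
  have hlin := lin_bigO hψA hψ0
  have hψt : Tendsto ψ (𝓝 0) (𝓝 0) := by
    have := hψA.continuousAt.tendsto; rwa [hψ0] at this
  have h1 : (fun z => φ (ψ z) - ψ z - a * ψ z ^ (p + 1)) =O[𝓝 0] fun z => ψ z ^ (p + 2) :=
    hφexp.comp_tendsto hψt
  have h2 : (fun z => ψ z ^ (p + 2)) =O[𝓝 0] fun z : ℂ => z ^ (p + 2) := by
    simpa using hlin.pow (p + 2)
  have h3 := pow_diff_bigO hp hlin (sub_id_bigO hψexp)
  have h4 := ((h1.trans h2).add hψexp).add (h3.const_mul_left a)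
  exact h4.congr_left fun z => by ring

private lemma exp_inv {φ ψ : ℂ → ℂ} {a : ℂ} {p : ℕ} (hp : 1 ≤ p)
    (hφexp : (fun z => φ z - z - a * z ^ (p + 1)) =O[𝓝 0] fun z => z ^ (p + 2))
    (hψA : AnalyticAt ℂ ψ 0) (hψ0 : ψ 0 = 0)
    (hev : ∀ᶠ z in 𝓝 (0 : ℂ), φ (ψ z) = z) :
    (fun z => ψ z - z - (-a) * z ^ (p + 1)) =O[𝓝 0] fun z => z ^ (p + 2) := by
  have hlin := lin_bigO hψA hψ0
  have hψt : Tendsto ψ (𝓝 0) (𝓝 0) := by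
    have := hψA.continuousAt.tendsto; rwa [hψ0] at this
  have h2 : (fun z => ψ z ^ (p + 2)) =O[𝓝 0] fun z : ℂ => z ^ (p + 2) := by
    simpa using hlin.pow (p + 2)
  have h1 : (fun z => φ (ψ z) - ψ z - a * ψ z ^ (p + 1)) =O[𝓝 0] fun z : ℂ => z ^ (p + 2) :=
    (hφexp.comp_tendsto hψt).trans h2
  have h1' : (fun z => z - ψ z - a * ψ z ^ (p + 1)) =O[𝓝 0] fun z : ℂ => z ^ (p + 2) :=
    h1.congr' (hev.mono fun z hz => by simp only [hz]) EventuallyEq.rfl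
  have hA : (fun z => ψ z ^ (p + 1)) =O[𝓝 0] fun z : ℂ => z ^ (p + 1) := by
    simpa using hlin.pow (p + 1)
  have hsub : (fun z => ψ z - z) =O[𝓝 0] fun z : ℂ => z ^ (p + 1) := by
    have h5 := (h1'.trans (pow_bigO_pow (by omega))).add (hA.const_mul_left a)
    exact h5.neg_left.congr_left fun z => by ring
  have h3 := pow_diff_bigO hp hlin hsub
  exact ((h1'.add (h3.const_mul_left a)).neg_left).congr_left fun z => by ring

private lemma iter_analytic {φ : ℂ → ℂ} (hA : AnalyticAt ℂ φ 0) (h0 : φ 0 = 0) (k : ℕ) :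
    AnalyticAt ℂ φ^[k] 0 ∧ φ^[k] 0 = 0 := by
  induction k with
  | zero => exact ⟨by simpa using (analyticAt_id : AnalyticAt ℂ (id : ℂ → ℂ) 0), by simp⟩
  | succ k ih =>
    rw [Function.iterate_succ']
    exact ⟨(ih.2.symm ▸ hA).comp ih.1, by simp [Function.comp, ih.2, h0]⟩

private lemma iter_tendsto {φ : ℂ → ℂ} (hA : AnalyticAt ℂ φ 0) (h0 : φ 0 = 0) (k : ℕ) :
    Tendsto φ^[k] (𝓝 0) (𝓝 0) := by
  have := (iter_analytic hA h0 k).1.continuousAt.tendsto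
  rwa [(iter_analytic hA h0 k).2] at this

private lemma exp_iter {φ : ℂ → ℂ} {a : ℂ} {p : ℕ} (hp : 1 ≤ p)
    (hA : AnalyticAt ℂ φ 0) (h0 : φ 0 = 0)
    (hexp : (fun z => φ z - z - a * z ^ (p + 1)) =O[𝓝 0] fun z => z ^ (p + 2)) (k : ℕ) :
    (fun z => φ^[k] z - z - (k : ℂ) * a * z ^ (p + 1)) =O[𝓝 0] fun z => z ^ (p + 2) := by
  induction k with
  | zero => simpa using isBigO_zero (E' := ℂ) (fun z : ℂ => z ^ (p + 2)) (𝓝 0)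
  | succ k ih =>
    have h := exp_comp hp hexp (iter_analytic hA h0 k).1 (iter_analytic hA h0 k).2 ih
    refine h.congr_left fun z => ?_
    simp only [Function.iterate_succ_apply']
    push_cast; ring

private lemma iter_inv_germ {φ ψ : ℂ → ℂ} (hφA : AnalyticAt ℂ φ 0) (hφ0 : φ 0 = 0)
    (hev : ∀ᶠ z in 𝓝 (0 : ℂ), ψ (φ z) = z) (k : ℕ) :
    ∀ᶠ z in 𝓝 (0 : ℂ), ψ^[k] (φ^[k] z) = z := by
  induction k with
  | zero => exact Eventually.of_forall fun z => by simp
  | succ k ih =>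
    filter_upwards [ih, (iter_tendsto hφA hφ0 k).eventually hev] with z h1 h2
    rw [Function.iterate_succ_apply ψ k, Function.iterate_succ_apply' φ k, h2, h1]

private lemma iterZ_coe (f finv : ℂ → ℂ) (j : ℕ) : iterZ f finv (j : ℤ) = f^[j] := by
  simp [iterZ]

private lemma iterZ_neg_coe (f finv : ℂ → ℂ) (j : ℕ) : iterZ f finv (-(j : ℤ)) = finv^[j] := by
  rcases Nat.eq_zero_or_pos j with h | h
  · subst h; simp [iterZ]
  · have h2 : ¬(0 ≤ -(j : ℤ)) := by omega
    simp [iterZ, h2, h.ne']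

private lemma main_aux {G φ g' : ℂ → ℂ} {b c : ℂ} {p : ℕ} (hp : 1 ≤ p)
    (hg'A : AnalyticAt ℂ g' 0) (hg'0 : g' 0 = 0)
    (hg'exp : (fun z => g' z - z - b * z ^ (p + 1)) =O[𝓝 0] fun z => z ^ (p + 2))
    (hφA : AnalyticAt ℂ φ 0) (hφ0 : φ 0 = 0)
    (hφexp : (fun z => φ z - z - c * z ^ (p + 1)) =O[𝓝 0] fun z => z ^ (p + 2))
    (hbc : b + c = 0)
    (hGt : Tendsto G (𝓝 0) (𝓝 0))
    (hφG : ∀ᶠ z in 𝓝 (0 : ℂ), φ (G z) = z) :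
    (g' =ᶠ[𝓝 (0 : ℂ)] G) ∨ ∃ (β' : ℂ) (q' : ℕ), β' ≠ 0 ∧ p < q' ∧
      (fun z => g' (φ z) - z - β' * z ^ (q' + 1)) =O[𝓝 0] fun z => z ^ (q' + 2) := by
  have hO : (fun z => g' (φ z) - z) =O[𝓝 0] fun z : ℂ => z ^ (p + 2) :=
    (exp_comp hp hg'exp hφA hφ0 hφexp).congr_left fun z => by rw [hbc]; ring
  have huA : AnalyticAt ℂ (fun z => g' (φ z) - z) 0 := by
    have h1 : AnalyticAt ℂ (g' ∘ φ) 0 := (hφ0.symm ▸ hg'A).comp hφA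
    exact h1.sub analyticAt_id
  by_cases hz : ∀ᶠ z in 𝓝 (0 : ℂ), g' (φ z) - z = 0
  · left
    filter_upwards [hGt.eventually hz, hφG] with w h1 h2
    have h3 := sub_eq_zero.mp h1
    rwa [h2] at h3
  · right
    have hord : analyticOrderAt (fun z => g' (φ z) - z) 0 ≠ ⊤ := fun h => hz (analyticOrderAt_eq_top.mp h)
    obtain ⟨N, hN⟩ := WithTop.ne_top_iff_exists.mp hord
    obtain ⟨w, hwA, hw0, hev⟩ := (huA.analyticOrderAt_eq_natCast (n := N)).mp hN.symm
    simp only [sub_zero, smul_eq_mul] at hev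
    have hwt : Tendsto w (𝓝[≠] (0 : ℂ)) (𝓝 (w 0)) := hwA.continuousAt.continuousWithinAt
    have hN2 : p + 2 ≤ N := by
      by_contra hcon
      push_neg at hcon
      have hO' : (fun z : ℂ => z ^ N * w z) =O[𝓝[≠] (0 : ℂ)] fun z => z ^ (p + 2) :=
        (hO.congr' hev EventuallyEq.rfl).mono nhdsWithin_le_nhds
      obtain ⟨C, hCpos, hC⟩ := hO'.exists_pos
      have h1 : ∀ᶠ z in 𝓝[≠] (0 : ℂ), ‖z‖ ≤ 1 := by
        refine Filter.Eventually.filter_mono nhdsWithin_le_nhds ?_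
        filter_upwards [Metric.closedBall_mem_nhds (0 : ℂ) one_pos] with z hz2
        simpa [dist_eq_norm] using hz2
      have hb : ∀ᶠ z in 𝓝[≠] (0 : ℂ), ‖w z‖ ≤ C * ‖z‖ := by
        filter_upwards [hC.bound, h1, self_mem_nhdsWithin] with z hC1 h1z hz0
        have hz0' : z ≠ 0 := hz0
        have hzn : (0 : ℝ) < ‖z‖ := norm_pos_iff.mpr hz0'
        have key : ‖z‖ ^ N * ‖w z‖ ≤ ‖z‖ ^ N * (C * ‖z‖) := by
          calc ‖z‖ ^ N * ‖w z‖ = ‖z ^ N * w z‖ := by rw [norm_mul, norm_pow]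
            _ ≤ C * ‖z ^ (p + 2)‖ := hC1
            _ = C * (‖z‖ ^ N * ‖z‖ ^ (p + 2 - N)) := by
                rw [norm_pow, ← pow_add, Nat.add_sub_cancel' (by omega)]
            _ ≤ C * (‖z‖ ^ N * ‖z‖ ^ 1) := by
                have h4 := pow_le_pow_of_le_one (norm_nonneg z) h1z
                  (show 1 ≤ p + 2 - N by omega)
                have h5 : (0 : ℝ) ≤ C := le_of_lt hCpos
                have h6 : (0 : ℝ) ≤ ‖z‖ ^ N := le_of_lt (pow_pos hzn N)
                exact mul_le_mul_of_nonneg_left (mul_le_mul_of_nonneg_left h4 h6) h5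
            _ = ‖z‖ ^ N * (C * ‖z‖) := by ring
        exact le_of_mul_le_mul_left key (pow_pos hzn N)
      have ht0 : Tendsto w (𝓝[≠] (0 : ℂ)) (𝓝 0) := by
        refine squeeze_zero_norm' hb ?_
        have : Tendsto (fun z : ℂ => C * ‖z‖) (𝓝[≠] 0) (𝓝 (C * ‖(0 : ℂ)‖)) :=
          ((continuous_norm.tendsto (0 : ℂ)).const_mul C).mono_left nhdsWithin_le_nhds
        simpa using this
      exact hw0 (tendsto_nhds_unique hwt ht0)
    refine ⟨w 0, N - 1, hw0, by omega, ?_⟩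
    have e1 : N - 1 + 1 = N := by omega
    have e2 : N - 1 + 2 = N + 1 := by omega
    simp only [e1, e2]
    have h2 : (fun z : ℂ => w z - w 0) =O[𝓝 0] fun z => z := by
      simpa using hwA.differentiableAt.isBigO_sub
    have h1 : (fun z : ℂ => z ^ N * (w z - w 0)) =O[𝓝 0] fun z => z ^ (N + 1) :=
      ((isBigO_refl (fun z : ℂ => z ^ N) (𝓝 0)).mul h2).congr_right
        fun z => (pow_succ z N).symm
    exact h1.congr' (hev.mono fun z hz2 => by simp only [hz2]; ring) EventuallyEq.rfl

/-- Let `f, g` be holomorphic germs fixing `0`, tangent to the identity,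
`f z = z + α z^(p+1) + O(z^(p+2))`, `g z = z + β z^(p+1) + O(z^(p+2))`, `α ≠ 0`,
`β/α = m/n` rational with `n > 0`. Then either `g^n = f^m` as germs, or
`h := g^n ∘ f^(-m)` satisfies `h z = z + β' z^(q'+1) + O(z^(q'+2))` with `β' ≠ 0`,
`q' > p`. -/
theorem stmt_2 (f g finv : ℂ → ℂ) (α β : ℂ) (p : ℕ) (hp : 1 ≤ p)
    (m : ℤ) (n : ℕ) (hn : 0 < n)
    (hf : AnalyticAt ℂ f 0) (hg : AnalyticAt ℂ g 0) (hfinv : AnalyticAt ℂ finv 0)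
    (hf0 : f 0 = 0) (hg0 : g 0 = 0) (hfinv0 : finv 0 = 0)
    (hinv : ∀ᶠ z in 𝓝 (0 : ℂ), finv (f z) = z ∧ f (finv z) = z)
    (hα : α ≠ 0) (hβ : β ≠ 0)
    (hratio : β * n = α * m)
    (hfexp : (fun z => f z - z - α * z ^ (p + 1)) =O[𝓝 0] fun z => z ^ (p + 2))
    (hgexp : (fun z => g z - z - β * z ^ (p + 1)) =O[𝓝 0] fun z => z ^ (p + 2)) :
    (g^[n] =ᶠ[𝓝 (0 : ℂ)] iterZ f finv m) ∨
    ∃ (β' : ℂ) (q' : ℕ), β' ≠ 0 ∧ p < q' ∧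
      (fun z => g^[n] (iterZ f finv (-m) z) - z - β' * z ^ (q' + 1))
        =O[𝓝 0] fun z => z ^ (q' + 2) := by
  have hfinvexp : (fun z => finv z - z - (-α) * z ^ (p + 1)) =O[𝓝 0] fun z => z ^ (p + 2) :=
    exp_inv hp hfexp hfinv hfinv0 (hinv.mono fun z hz => hz.2)
  have hgiter := exp_iter hp hg hg0 hgexp n
  have hgA := (iter_analytic hg hg0 n).1
  have hg0' := (iter_analytic hg hg0 n).2
  obtain ⟨j, rfl | rfl⟩ := Int.eq_nat_or_neg m
  · simp only [iterZ_coe, iterZ_neg_coe]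
    refine main_aux hp hgA hg0' hgiter (iter_analytic hfinv hfinv0 j).1
      (iter_analytic hfinv hfinv0 j).2 (exp_iter hp hfinv hfinv0 hfinvexp j) ?_
      (iter_tendsto hf hf0 j) (iter_inv_germ hf hf0 (hinv.mono fun z hz => hz.1) j)
    push_cast at hratio ⊢
    linear_combination hratio
  · simp only [neg_neg, iterZ_coe, iterZ_neg_coe]
    refine main_aux (c := (j : ℂ) * α) hp hgA hg0' hgiter (iter_analytic hf hf0 j).1
      (iter_analytic hf hf0 j).2 ?_ ?_
      (iter_tendsto hfinv hfinv0 j) (iter_inv_germ hfinv hfinv0 (hinv.mono fun z hz => hz.2) j)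
    · exact exp_iter hp hf hf0 hfexp j
    · push_cast at hratio ⊢
      linear_combination hratio
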